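/- There exists an absolute constant C > 0 such that the following holds. Let a, a' ≥ 1 be real numbers, and let f and f' be positive definite real binary quadratic forms with discriminants −4a² and −4a'² respectively (i.e. f(x,y) = αx² + 2βxy + γy² with α > 0 and β² − αγ = −a², and similarly for f'). Then for all real X ≥ 1 and all ε with 0 < ε ≤ 1, the Lebesgue measure of the set {(x,y,x',y') ∈ ℝ⁴ : f(x,y) ≤ X, f'(x',y') ≤ X, |f(x,y) − f'(x',y') − (a − a')| ≤ ε} is at most C·ε·X/(a·a'). (This is the bound on the singular integral I_{χ_{a,a'}} ≪ X/(aa').) -/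

import Mathlib

open MeasureTheory Real Set

lemma disc_vol_le (u : ℝ) (hu : 0 ≤ u) :
    volume {q : ℝ × ℝ | q.1 ^ 2 + q.2 ^ 2 ≤ u} = ENNReal.ofReal (π * u) := by
  have hpre : Complex.measurableEquivRealProd ⁻¹' {q : ℝ × ℝ | q.1 ^ 2 + q.2 ^ 2 ≤ u}
      = Metric.closedBall 0 (Real.sqrt u) := by
    ext z
    simp only [Set.mem_preimage, Complex.measurableEquivRealProd_apply, Set.mem_setOf_eq,
      Metric.mem_closedBall, Complex.dist_eq, sub_zero]
    rw [Complex.norm_def, Complex.normSq_apply]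
    constructor
    · intro h
      exact Real.sqrt_le_sqrt (show z.re*z.re+z.im*z.im ≤ u by nlinarith)
    · intro h
      have h2 := mul_self_le_mul_self (Real.sqrt_nonneg (z.re*z.re+z.im*z.im)) h
      rw [Real.mul_self_sqrt (by nlinarith : (0:ℝ) ≤ z.re*z.re+z.im*z.im),
        Real.mul_self_sqrt hu] at h2
      nlinarith
  have hmp := Complex.volume_preserving_equiv_real_prod.measure_preimage
    (s := {q : ℝ × ℝ | q.1 ^ 2 + q.2 ^ 2 ≤ u})
    (MeasurableSet.nullMeasurableSet (measurableSet_le (by fun_prop) measurable_const))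
  rw [← hmp, hpre, Complex.volume_closedBall,
    show ((NNReal.pi : ENNReal)) = ENNReal.ofReal π by
      rw [← NNReal.coe_real_pi, ENNReal.ofReal_coe_nnreal],
    ← ENNReal.ofReal_pow (Real.sqrt_nonneg u), Real.sq_sqrt hu,
    ← ENNReal.ofReal_mul hu, mul_comm]

lemma disc_vol_lt (u : ℝ) (hu : 0 ≤ u) :
    volume {q : ℝ × ℝ | q.1 ^ 2 + q.2 ^ 2 < u} = ENNReal.ofReal (π * u) := by
  have hpre : Complex.measurableEquivRealProd ⁻¹' {q : ℝ × ℝ | q.1 ^ 2 + q.2 ^ 2 < u}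
      = Metric.ball 0 (Real.sqrt u) := by
    ext z
    simp only [Set.mem_preimage, Complex.measurableEquivRealProd_apply, Set.mem_setOf_eq,
      Metric.mem_ball, Complex.dist_eq, sub_zero]
    rw [Complex.norm_def, Complex.normSq_apply]
    constructor
    · intro h
      exact Real.sqrt_lt_sqrt (by nlinarith) (by nlinarith)
    · intro h
      have h2 := mul_self_lt_mul_self (Real.sqrt_nonneg (z.re*z.re+z.im*z.im)) h
      rw [Real.mul_self_sqrt (by nlinarith : (0:ℝ) ≤ z.re*z.re+z.im*z.im),
        Real.mul_self_sqrt hu] at h2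
      nlinarith
  have hmp := Complex.volume_preserving_equiv_real_prod.measure_preimage
    (s := {q : ℝ × ℝ | q.1 ^ 2 + q.2 ^ 2 < u})
    (MeasurableSet.nullMeasurableSet (measurableSet_lt (by fun_prop) measurable_const))
  rw [← hmp, hpre, Complex.volume_ball,
    show ((NNReal.pi : ENNReal)) = ENNReal.ofReal π by
      rw [← NNReal.coe_real_pi, ENNReal.ofReal_coe_nnreal],
    ← ENNReal.ofReal_pow (Real.sqrt_nonneg u), Real.sq_sqrt hu,
    ← ENNReal.ofReal_mul hu, mul_comm]

lemma ellipse_facts (a α β γ : ℝ) (ha : 0 < a) (hα : 0 < α)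
    (hd : β ^ 2 - α * γ = -a ^ 2) :
    (∀ p : ℝ × ℝ, 0 ≤ α * p.1 ^ 2 + 2 * β * p.1 * p.2 + γ * p.2 ^ 2) ∧
    (∀ u : ℝ, 0 ≤ u →
      volume {p : ℝ × ℝ | α * p.1 ^ 2 + 2 * β * p.1 * p.2 + γ * p.2 ^ 2 ≤ u}
        = ENNReal.ofReal (π * u / a)) ∧
    (∀ u : ℝ, 0 ≤ u →
      volume {p : ℝ × ℝ | α * p.1 ^ 2 + 2 * β * p.1 * p.2 + γ * p.2 ^ 2 < u}
        = ENNReal.ofReal (π * u / a)) := by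
  set s := Real.sqrt α with hs
  have hs0 : 0 < s := Real.sqrt_pos.mpr hα
  have hs2 : s * s = α := Real.mul_self_sqrt hα.le
  set T := Matrix.toLin (Module.Basis.finTwoProd ℝ) (Module.Basis.finTwoProd ℝ) !![s, β / s; 0, a / s]
    with hT
  have hTdet : LinearMap.det T = a := by
    rw [hT, LinearMap.det_toLin, Matrix.det_fin_two_of]
    field_simp
    ring
  have hTq : ∀ p : ℝ × ℝ, (T p).1 ^ 2 + (T p).2 ^ 2
      = α * p.1 ^ 2 + 2 * β * p.1 * p.2 + γ * p.2 ^ 2 := by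
    intro p
    rw [hT, Matrix.toLin_finTwoProd_apply]
    have hαγ : α * γ = β ^ 2 + a ^ 2 := by linarith
    field_simp
    linear_combination (s*s*p.1^2 - γ*p.2^2) * hs2 - p.2^2 * hαγ
  have hdet_ne : LinearMap.det T ≠ 0 := by rw [hTdet]; exact ne_of_gt ha
  have habs : |((LinearMap.det T))⁻¹| = a⁻¹ := by
    rw [hTdet]; exact abs_of_nonneg (inv_nonneg.mpr ha.le)
  refine ⟨fun p => by rw [← hTq]; positivity, ?_, ?_⟩
  · intro u hu
    have hset : {p : ℝ × ℝ | α * p.1 ^ 2 + 2 * β * p.1 * p.2 + γ * p.2 ^ 2 ≤ u}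
        = T ⁻¹' {q : ℝ × ℝ | q.1 ^ 2 + q.2 ^ 2 ≤ u} := by
      ext p; simp [hTq p]
    rw [hset, Measure.addHaar_preimage_linearMap volume hdet_ne, habs, disc_vol_le u hu,
      ← ENNReal.ofReal_mul (inv_nonneg.mpr ha.le)]
    congr 1; field_simp
  · intro u hu
    have hset : {p : ℝ × ℝ | α * p.1 ^ 2 + 2 * β * p.1 * p.2 + γ * p.2 ^ 2 < u}
        = T ⁻¹' {q : ℝ × ℝ | q.1 ^ 2 + q.2 ^ 2 < u} := by
      ext p; simp [hTq p]
    rw [hset, Measure.addHaar_preimage_linearMap volume hdet_ne, habs, disc_vol_lt u hu,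
      ← ENNReal.ofReal_mul (inv_nonneg.mpr ha.le)]
    congr 1; field_simp

lemma annulus_vol (a α β γ : ℝ) (ha : 0 < a) (hα : 0 < α)
    (hd : β ^ 2 - α * γ = -a ^ 2) (c d : ℝ) (hcd : c ≤ d) :
    volume {p : ℝ × ℝ | c ≤ α * p.1 ^ 2 + 2 * β * p.1 * p.2 + γ * p.2 ^ 2 ∧
        α * p.1 ^ 2 + 2 * β * p.1 * p.2 + γ * p.2 ^ 2 ≤ d}
      ≤ ENNReal.ofReal (π * (d - c) / a) := by
  obtain ⟨hnn, hle, hlt⟩ := ellipse_facts a α β γ ha hα hd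
  have mQ : Measurable (fun p : ℝ × ℝ => α * p.1 ^ 2 + 2 * β * p.1 * p.2 + γ * p.2 ^ 2) := by
    fun_prop
  rcases lt_or_ge d 0 with hd0 | hd0
  · have : {p : ℝ × ℝ | c ≤ α * p.1 ^ 2 + 2 * β * p.1 * p.2 + γ * p.2 ^ 2 ∧
        α * p.1 ^ 2 + 2 * β * p.1 * p.2 + γ * p.2 ^ 2 ≤ d} = ∅ := by
      ext p; simp only [Set.mem_setOf_eq, Set.mem_empty_iff_false, iff_false, not_and, not_le]
      intro _; linarith [hnn p]
    rw [this, measure_empty]; exact zero_le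
  rcases le_or_gt c 0 with hc0 | hc0
  · calc volume _ ≤ volume {p : ℝ × ℝ | α * p.1 ^ 2 + 2 * β * p.1 * p.2 + γ * p.2 ^ 2 ≤ d} :=
          measure_mono (fun p hp => hp.2)
      _ = ENNReal.ofReal (π * d / a) := hle d hd0
      _ ≤ ENNReal.ofReal (π * (d - c) / a) := by
          apply ENNReal.ofReal_le_ofReal
          gcongr <;> linarith [pi_pos]
  · have hsub : {p : ℝ × ℝ | c ≤ α * p.1 ^ 2 + 2 * β * p.1 * p.2 + γ * p.2 ^ 2 ∧
        α * p.1 ^ 2 + 2 * β * p.1 * p.2 + γ * p.2 ^ 2 ≤ d}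
        ⊆ {p : ℝ × ℝ | α * p.1 ^ 2 + 2 * β * p.1 * p.2 + γ * p.2 ^ 2 ≤ d} \
          {p : ℝ × ℝ | α * p.1 ^ 2 + 2 * β * p.1 * p.2 + γ * p.2 ^ 2 < c} := by
      intro p hp
      exact ⟨hp.2, by simp only [Set.mem_setOf_eq, not_lt]; exact hp.1⟩
    refine le_trans (measure_mono hsub) ?_
    have hss : {p : ℝ × ℝ | α * p.1 ^ 2 + 2 * β * p.1 * p.2 + γ * p.2 ^ 2 < c}
        ⊆ {p : ℝ × ℝ | α * p.1 ^ 2 + 2 * β * p.1 * p.2 + γ * p.2 ^ 2 ≤ d} :=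
      fun p hp => le_trans (le_of_lt hp) hcd
    rw [measure_diff hss (MeasurableSet.nullMeasurableSet
        (measurableSet_lt mQ measurable_const))
      (by rw [hlt c hc0.le]; exact ENNReal.ofReal_ne_top)]
    rw [hle d hd0, hlt c hc0.le, ← ENNReal.ofReal_sub _ (by positivity)]
    apply ENNReal.ofReal_le_ofReal
    have : π * d / a - π * c / a = π * (d - c) / a := by ring
    linarith [this.le]

theorem singular_integral_upper_bound :
    ∃ C : ℝ, 0 < C ∧
    ∀ a a' : ℝ, 1 ≤ a → 1 ≤ a' →
    ∀ α β γ α' β' γ' : ℝ,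
      0 < α → β ^ 2 - α * γ = -a ^ 2 →
      0 < α' → β' ^ 2 - α' * γ' = -a' ^ 2 →
    ∀ X : ℝ, 1 ≤ X → ∀ ε : ℝ, 0 < ε → ε ≤ 1 →
      volume {p : ℝ × ℝ × ℝ × ℝ |
          α * p.1 ^ 2 + 2 * β * p.1 * p.2.1 + γ * p.2.1 ^ 2 ≤ X ∧
          α' * p.2.2.1 ^ 2 + 2 * β' * p.2.2.1 * p.2.2.2 + γ' * p.2.2.2 ^ 2 ≤ X ∧
          |(α * p.1 ^ 2 + 2 * β * p.1 * p.2.1 + γ * p.2.1 ^ 2) -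
            (α' * p.2.2.1 ^ 2 + 2 * β' * p.2.2.1 * p.2.2.2 + γ' * p.2.2.2 ^ 2) -
            (a - a')| ≤ ε} ≤
        ENNReal.ofReal (C * ε * X / (a * a')) := by
  refine ⟨100, by norm_num, ?_⟩
  intro a a' ha ha' α β γ α' β' γ' hα hd hα' hd' X hX ε hε hε1
  have ha0 : (0:ℝ) < a := by linarith
  have ha'0 : (0:ℝ) < a' := by linarith
  have hX0 : (0:ℝ) ≤ X := by linarith
  obtain ⟨hnn, hle, hlt⟩ := ellipse_facts a α β γ ha0 hα hd
  have mQ : Measurable (fun p : ℝ × ℝ =>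
      α * p.1 ^ 2 + 2 * β * p.1 * p.2 + γ * p.2 ^ 2) := by fun_prop
  set K : ENNReal := ENNReal.ofReal (π * (2 * ε) / a') with hK
  have key : ∀ t : ℝ, volume {r : ℝ × ℝ |
      α' * r.1 ^ 2 + 2 * β' * r.1 * r.2 + γ' * r.2 ^ 2 ≤ X ∧
      |t - (α' * r.1 ^ 2 + 2 * β' * r.1 * r.2 + γ' * r.2 ^ 2) - (a - a')| ≤ ε} ≤ K := by
    intro t
    have hsub : {r : ℝ × ℝ |
        α' * r.1 ^ 2 + 2 * β' * r.1 * r.2 + γ' * r.2 ^ 2 ≤ X ∧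
        |t - (α' * r.1 ^ 2 + 2 * β' * r.1 * r.2 + γ' * r.2 ^ 2) - (a - a')| ≤ ε}
        ⊆ {r : ℝ × ℝ | (t - (a - a') - ε) ≤
            α' * r.1 ^ 2 + 2 * β' * r.1 * r.2 + γ' * r.2 ^ 2 ∧
            α' * r.1 ^ 2 + 2 * β' * r.1 * r.2 + γ' * r.2 ^ 2 ≤ (t - (a - a') + ε)} := by
      intro r hr
      have h2 := abs_le.mp hr.2
      exact ⟨by linarith [h2.1, h2.2], by linarith [h2.1, h2.2]⟩
    calc volume _ ≤ _ := measure_mono hsub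
      _ ≤ ENNReal.ofReal (π * ((t - (a - a') + ε) - (t - (a - a') - ε)) / a') :=
          annulus_vol a' α' β' γ' ha'0 hα' hd' _ _ (by linarith)
      _ = K := by rw [hK]; congr 1; ring
  set E : Set (ℝ × ℝ) := {p : ℝ × ℝ | α * p.1 ^ 2 + 2 * β * p.1 * p.2 + γ * p.2 ^ 2 ≤ X}
    with hE
  have mE : MeasurableSet E := measurableSet_le mQ measurable_const
  set S : Set (ℝ × ℝ × ℝ × ℝ) := {p : ℝ × ℝ × ℝ × ℝ |
      α * p.1 ^ 2 + 2 * β * p.1 * p.2.1 + γ * p.2.1 ^ 2 ≤ X ∧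
      α' * p.2.2.1 ^ 2 + 2 * β' * p.2.2.1 * p.2.2.2 + γ' * p.2.2.2 ^ 2 ≤ X ∧
      |(α * p.1 ^ 2 + 2 * β * p.1 * p.2.1 + γ * p.2.1 ^ 2) -
        (α' * p.2.2.1 ^ 2 + 2 * β' * p.2.2.1 * p.2.2.2 + γ' * p.2.2.2 ^ 2) -
        (a - a')| ≤ ε} with hS
  have mS : MeasurableSet S := by
    rw [hS]
    simp only [Set.setOf_and]
    apply MeasurableSet.inter (measurableSet_le (by fun_prop) (by fun_prop))
    apply MeasurableSet.inter (measurableSet_le (by fun_prop) (by fun_prop))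
    exact measurableSet_le (by fun_prop) (by fun_prop)
  have slice_le : ∀ x y : ℝ, volume {r : ℝ × ℝ |
      α * x ^ 2 + 2 * β * x * y + γ * y ^ 2 ≤ X ∧
      α' * r.1 ^ 2 + 2 * β' * r.1 * r.2 + γ' * r.2 ^ 2 ≤ X ∧
      |(α * x ^ 2 + 2 * β * x * y + γ * y ^ 2) -
        (α' * r.1 ^ 2 + 2 * β' * r.1 * r.2 + γ' * r.2 ^ 2) - (a - a')| ≤ ε}
      ≤ E.indicator (fun _ => K) (x, y) := by
    intro x y
    by_cases h : α * x ^ 2 + 2 * β * x * y + γ * y ^ 2 ≤ X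
    · rw [Set.indicator_of_mem (by exact h)]
      refine le_trans (measure_mono ?_) (key (α * x ^ 2 + 2 * β * x * y + γ * y ^ 2))
      intro r hr
      exact ⟨hr.2.1, hr.2.2⟩
    · have hempty : {r : ℝ × ℝ |
          α * x ^ 2 + 2 * β * x * y + γ * y ^ 2 ≤ X ∧
          α' * r.1 ^ 2 + 2 * β' * r.1 * r.2 + γ' * r.2 ^ 2 ≤ X ∧
          |(α * x ^ 2 + 2 * β * x * y + γ * y ^ 2) -
            (α' * r.1 ^ 2 + 2 * β' * r.1 * r.2 + γ' * r.2 ^ 2) - (a - a')| ≤ ε} = ∅ :=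
        Set.eq_empty_of_forall_notMem fun r hr => h hr.1
      rw [hempty, measure_empty]
      exact zero_le
  have step1 : volume S ≤ ∫⁻ x : ℝ, ∫⁻ y : ℝ, E.indicator (fun _ => K) (x, y) := by
    have h1 : volume S = ∫⁻ x : ℝ, volume (Prod.mk x ⁻¹' S) := by
      rw [Measure.volume_eq_prod, Measure.prod_apply mS]
    rw [h1]
    refine lintegral_mono fun x => ?_
    show volume (Prod.mk x ⁻¹' S) ≤ _
    have h2 : volume (Prod.mk x ⁻¹' S) = ∫⁻ y : ℝ, volume (Prod.mk y ⁻¹' (Prod.mk x ⁻¹' S)) := by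
      rw [Measure.volume_eq_prod, Measure.prod_apply (measurable_prodMk_left mS)]
    rw [h2]
    refine lintegral_mono fun y => ?_
    show volume (Prod.mk y ⁻¹' (Prod.mk x ⁻¹' S)) ≤ _
    exact slice_le x y
  have step2 : (∫⁻ x : ℝ, ∫⁻ y : ℝ, E.indicator (fun _ => K) (x, y)) = K * volume E := by
    rw [← MeasureTheory.lintegral_prod _ ((measurable_const.indicator mE).aemeasurable),
      ← Measure.volume_eq_prod _ _, lintegral_indicator mE, setLIntegral_const]
  have step3 : K * volume E ≤ ENNReal.ofReal (100 * ε * X / (a * a')) := by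
    rw [hE, hle X hX0, hK, ← ENNReal.ofReal_mul (by positivity)]
    apply ENNReal.ofReal_le_ofReal
    have h1 : (π * (2 * ε) / a') * (π * X / a) = (2 * π * π) * (ε * X) / (a * a') := by ring
    have h2 : (100:ℝ) * ε * X / (a * a') = (100 * (ε * X)) / (a * a') := by ring
    rw [h1, h2]
    gcongr
    nlinarith [Real.pi_le_four, Real.pi_pos, mul_nonneg hε.le hX0]
  exact le_trans step1 (le_trans (le_of_eq step2) step3)
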